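/- Let X be a global solution of the inviscid dyadic model with X(0) ∈ H_+, i.e. X_n(0) < 0 for at most finitely many n. Then X is of class K: the function a(t) = sup_{n≥1} (−k_n X_{n+1}(t)) is locally integrable on [0,∞). More precisely, there exists n_0 such that a(t) ≤ k_{n_0} √E(0) for all t ≥ 0, where E(0) = Σ_{j≥1} X_j(0)^2. -/

import Mathlib

open MeasureTheory Set Filter Topology

/-- `X` is a solution of the inviscid dyadic model on the time set `D`
(typically `Set.Ico 0 T` or `Set.Ici 0`), with coefficients `k` bounded by `C * 2 ^ n`.
The components of the solution are `X 1, X 2, ...`; by convention `X 0 ≡ 0` and `k 0 = 0`. -/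
def IsDyadicSolutionOn (C : ℝ) (k : ℕ → ℝ) (X : ℕ → ℝ → ℝ) (D : Set ℝ) : Prop :=
  0 < C ∧ k 0 = 0 ∧
  (∀ n : ℕ, 1 ≤ n → 0 ≤ k n ∧ k n ≤ C * 2 ^ n) ∧
  (∀ t : ℝ, X 0 t = 0) ∧
  (∀ n : ℕ, 1 ≤ n → ∀ t ∈ D, HasDerivWithinAt (X n)
      (k (n - 1) * X (n - 1) t ^ 2 - k n * X n t * X (n + 1) t) D t) ∧
  (∀ t ∈ D, Summable fun j : ℕ => X (j + 1) t ^ 2)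

/-- The energy `E(t) = ∑_{j ≥ 1} X_j(t)^2`. -/
noncomputable def energy (X : ℕ → ℝ → ℝ) (t : ℝ) : ℝ :=
  ∑' j : ℕ, X (j + 1) t ^ 2

/-- The function `a(t) = sup_{n ≥ 1} (- k_n X_{n+1}(t))`. -/
noncomputable def classKfun (k : ℕ → ℝ) (X : ℕ → ℝ → ℝ) (t : ℝ) : ℝ :=
  ⨆ n : ℕ, -(k (n + 1) * X (n + 2) t)

/-- A solution is of class `K` if `a(t) = sup_{n ≥ 1} (- k_n X_{n+1}(t))` is locally
integrable on `[0,∞)`. -/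
def IsClassK (k : ℕ → ℝ) (X : ℕ → ℝ → ℝ) : Prop :=
  LocallyIntegrableOn (classKfun k X) (Set.Ici 0)

section Aux

variable {C : ℝ} {k : ℕ → ℝ} {X : ℕ → ℝ → ℝ}

lemma dyadic_contOn (hX : IsDyadicSolutionOn C k X (Set.Ici 0)) (n : ℕ) :
    ContinuousOn (X n) (Set.Ici 0) := by
  obtain ⟨hC, hk0, hk, hX0, hD, hsum⟩ := hX
  rcases Nat.eq_zero_or_pos n with rfl | hn
  · exact (continuousOn_const (c := (0:ℝ))).congr fun t _ => hX0 t
  · exact fun t ht => (hD n hn t ht).continuousWithinAt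

lemma dyadic_k_nonneg (hX : IsDyadicSolutionOn C k X (Set.Ici 0)) (n : ℕ) : 0 ≤ k n := by
  rcases Nat.eq_zero_or_pos n with rfl | hn
  · rw [hX.2.1]
  · exact (hX.2.2.1 n hn).1

/-- Positivity is preserved componentwise. -/
lemma dyadic_nonneg (hX : IsDyadicSolutionOn C k X (Set.Ici 0)) (n : ℕ) (hn : 1 ≤ n)
    (h0 : 0 ≤ X n 0) : ∀ t ∈ Set.Ici (0:ℝ), 0 ≤ X n t := by
  intro t ht
  rcases eq_or_lt_of_le (Set.mem_Ici.mp ht : (0:ℝ) ≤ t) with rfl | htpos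
  · exact h0
  set b : ℝ → ℝ := fun s => k n * X (n + 1) s with hb
  have hbc : ContinuousOn b (Set.Ici 0) := continuousOn_const.mul (dyadic_contOn hX (n + 1))
  set g : ℝ → ℝ := fun u => ∫ s in (0:ℝ)..u, b s with hg
  have hgc : ContinuousOn g (Set.Icc 0 t) := by
    have hInt : IntegrableOn b (Set.Icc 0 t) := by
      exact (hbc.mono (Set.Icc_subset_Ici_self)).integrableOn_Icc
    have := intervalIntegral.continuousOn_primitive (f := b) (μ := volume) (a := 0) (b := t) hInt
    exact this.congr fun x hx => by
      simp only [hg, intervalIntegral.integral_of_le hx.1]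
  have hg' : ∀ x ∈ Set.Ioo 0 t, HasDerivAt g (b x) x := by
    intro x hx
    apply intervalIntegral.integral_hasDerivAt_right
    · exact (hbc.mono (by
        rw [Set.uIcc_of_le hx.1.le]
        exact Set.Icc_subset_Ici_self)).intervalIntegrable
    · exact (ContinuousOn.stronglyMeasurableAtFilter isOpen_Ioi
        (hbc.mono (Set.Ioi_subset_Ici_self)) x hx.1)
    · exact (hbc.mono Set.Ioi_subset_Ici_self).continuousAt (Ioi_mem_nhds hx.1)
  set Y : ℝ → ℝ := fun u => X n u * Real.exp (g u) with hY
  have hYd : ∀ x ∈ Set.Ioo 0 t,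
      HasDerivAt Y (k (n-1) * X (n-1) x ^ 2 * Real.exp (g x)) x := by
    intro x hx
    have hXn : HasDerivAt (X n)
        (k (n - 1) * X (n - 1) x ^ 2 - k n * X n x * X (n + 1) x) x :=
      (hX.2.2.2.2.1 n hn x hx.1.le).hasDerivAt (Ici_mem_nhds hx.1)
    have hgx := (hg' x hx).exp
    have := hXn.mul hgx
    refine this.congr_deriv ?_
    simp only [hb]
    ring
  have hmono : MonotoneOn Y (Set.Icc 0 t) := by
    apply monotoneOn_of_deriv_nonneg (convex_Icc 0 t)
    · exact (((dyadic_contOn hX n).mono Set.Icc_subset_Ici_self).mul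
        (Real.continuous_exp.comp_continuousOn hgc))
    · rw [interior_Icc]
      exact fun x hx => ((hYd x hx).differentiableAt).differentiableWithinAt
    · rw [interior_Icc]
      intro x hx
      rw [(hYd x hx).deriv]
      have h1 : 0 ≤ k (n-1) := dyadic_k_nonneg hX (n-1)
      positivity
  have h01 : Y 0 ≤ Y t :=
    hmono ⟨le_refl 0, htpos.le⟩ ⟨htpos.le, le_refl t⟩ htpos.le
  have hY0 : Y 0 = X n 0 := by
    simp [hY, hg, intervalIntegral.integral_same]
  have : 0 ≤ Y t := by rw [hY0] at h01; exact h0.trans h01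
  have hexp : 0 < Real.exp (g t) := Real.exp_pos _
  exact nonneg_of_mul_nonneg_right (by rw [mul_comm]; exact this) hexp

end Aux

section Aux2
variable {C : ℝ} {k : ℕ → ℝ} {X : ℕ → ℝ → ℝ}

lemma dyadic_sq_le_energy (hX : IsDyadicSolutionOn C k X (Set.Ici 0)) (n₀ : ℕ) (hn₀ : 1 ≤ n₀)
    (hpos : ∀ n, n₀ ≤ n → ∀ t ∈ Set.Ici (0:ℝ), 0 ≤ X n t)
    (m : ℕ) (hm : 1 ≤ m) : ∀ t ∈ Set.Ici (0:ℝ), X m t ^ 2 ≤ energy X 0 := by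
  intro t ht
  set N := max m n₀ with hNdef
  have hmN : m ≤ N := le_max_left _ _
  have hn₀N : n₀ ≤ N := le_max_right _ _
  set S : ℝ → ℝ := fun u => ∑ j ∈ Finset.range N, X (j + 1) u ^ 2 with hS
  have hSD : ∀ x ∈ Set.Ioi (0:ℝ),
      HasDerivAt S (-(2 * k N * X N x ^ 2 * X (N + 1) x)) x := by
    intro x hx
    have hx0 : (0:ℝ) ≤ x := le_of_lt hx
    have hj : ∀ j : ℕ, HasDerivAt (fun u => X (j + 1) u ^ 2)
        (2 * k j * X j x ^ 2 * X (j + 1) x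
          - 2 * k (j + 1) * X (j + 1) x ^ 2 * X (j + 1 + 1) x) x := by
      intro j
      have h1 := (hX.2.2.2.2.1 (j + 1) (Nat.le_add_left 1 j) x hx0).hasDerivAt
        (Ici_mem_nhds hx)
      simp only [Nat.add_sub_cancel] at h1
      have h2 := h1.fun_pow 2
      refine h2.congr_deriv ?_
      push_cast
      ring
    have hsum := HasDerivAt.fun_sum (u := Finset.range N)
      (A := fun j u => X (j + 1) u ^ 2)
      (A' := fun j => 2 * k j * X j x ^ 2 * X (j + 1) x
          - 2 * k (j + 1) * X (j + 1) x ^ 2 * X (j + 1 + 1) x)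
      (fun j _ => hj j)
    have heq : (∑ j ∈ Finset.range N, (2 * k j * X j x ^ 2 * X (j + 1) x
          - 2 * k (j + 1) * X (j + 1) x ^ 2 * X (j + 1 + 1) x))
        = -(2 * k N * X N x ^ 2 * X (N + 1) x) := by
      rw [Finset.sum_range_sub' (fun j => 2 * k j * X j x ^ 2 * X (j + 1) x) N]
      rw [hX.2.1]
      ring
    rw [heq] at hsum
    exact hsum
  have hanti : AntitoneOn S (Set.Ici 0) := by
    apply antitoneOn_of_deriv_nonpos (convex_Ici 0)
    · exact continuousOn_finset_sum _ fun j _ => (dyadic_contOn hX (j + 1)).pow 2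
    · rw [interior_Ici]
      exact fun x hx => (hSD x hx).differentiableAt.differentiableWithinAt
    · rw [interior_Ici]
      intro x hx
      rw [(hSD x hx).deriv]
      have h1 : 0 ≤ k N := dyadic_k_nonneg hX N
      have h3 : 0 ≤ X (N + 1) x := hpos (N + 1) (by omega) x (Set.mem_Ici.mpr (le_of_lt hx))
      have h2 : 0 ≤ X N x ^ 2 := sq_nonneg _
      have : (0:ℝ) ≤ 2 * k N * X N x ^ 2 * X (N + 1) x := by positivity
      linarith
  have h1 : X m t ^ 2 ≤ S t := by
    have hmm : m - 1 + 1 = m := Nat.succ_pred_eq_of_pos hm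
    have hmem : m - 1 ∈ Finset.range N := Finset.mem_range.2 (by omega)
    have := Finset.single_le_sum (f := fun j => X (j + 1) t ^ 2)
      (fun i _ => sq_nonneg _) hmem
    simpa only [hmm] using this
  have h2 : S t ≤ S 0 := hanti (self_mem_Ici) ht ht
  have h3 : S 0 ≤ energy X 0 :=
    Summable.sum_le_tsum (Finset.range N) (fun i _ => sq_nonneg _) (hX.2.2.2.2.2 0 self_mem_Ici)
  linarith

end Aux2

/-- every global solution starting in `H₊` is of class `K`; moreover
there exists `n₀` with `a(t) ≤ k_{n₀} √(E(0))` for all `t ≥ 0`. -/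
theorem Hplus_initial_implies_classK
    (C : ℝ) (k : ℕ → ℝ) (X : ℕ → ℝ → ℝ)
    (hX : IsDyadicSolutionOn C k X (Set.Ici 0))
    (hfin : {n : ℕ | X n 0 < 0}.Finite) :
    IsClassK k X ∧
    ∃ n₀ : ℕ, ∀ t ∈ Set.Ici (0 : ℝ),
      classKfun k X t ≤ k n₀ * Real.sqrt (energy X 0) := by
  have hknn : ∀ m, 0 ≤ k m := dyadic_k_nonneg hX
  obtain ⟨n₁, hn₁⟩ := hfin.bddAbove
  set n₀ := n₁ + 1 with hn₀def
  have hpos : ∀ n, n₀ ≤ n → ∀ t ∈ Set.Ici (0:ℝ), 0 ≤ X n t := by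
    intro n hn t ht
    have h0 : 0 ≤ X n 0 := by
      by_contra h
      have hmem : n ∈ {n | X n 0 < 0} := not_le.1 h
      have := hn₁ hmem
      omega
    exact dyadic_nonneg hX n (by omega) h0 t ht
  have hE : ∀ m, 1 ≤ m → ∀ t ∈ Set.Ici (0:ℝ), X m t ^ 2 ≤ energy X 0 :=
    fun m hm => dyadic_sq_le_energy hX n₀ (by omega) hpos m hm
  have habs : ∀ m, 1 ≤ m → ∀ t ∈ Set.Ici (0:ℝ), |X m t| ≤ Real.sqrt (energy X 0) := by
    intro m hm t ht
    rw [← Real.sqrt_sq_eq_abs]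
    exact Real.sqrt_le_sqrt (hE m hm t ht)
  obtain ⟨n₂, hn₂mem, hn₂max⟩ := Finset.exists_max_image (Finset.Icc 1 (n₀ + 1)) k
    ⟨1, Finset.mem_Icc.2 ⟨le_refl 1, by omega⟩⟩
  have hsqnn : 0 ≤ Real.sqrt (energy X 0) := Real.sqrt_nonneg _
  have hkn₂ : 0 ≤ k n₂ := hknn n₂
  have hterm : ∀ t ∈ Set.Ici (0:ℝ), ∀ n : ℕ,
      -(k (n + 1) * X (n + 2) t) ≤ k n₂ * Real.sqrt (energy X 0) := by
    intro t ht n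
    by_cases hcase : n₀ ≤ n + 2
    · have hXp : 0 ≤ X (n + 2) t := hpos (n + 2) hcase t ht
      have h1 : 0 ≤ k (n + 1) * X (n + 2) t := mul_nonneg (hknn _) hXp
      have h2 : 0 ≤ k n₂ * Real.sqrt (energy X 0) := mul_nonneg hkn₂ hsqnn
      linarith
    · have hle : k (n + 1) ≤ k n₂ := hn₂max (n + 1) (Finset.mem_Icc.2 ⟨by omega, by omega⟩)
      have h1 : -(k (n + 1) * X (n + 2) t) ≤ k (n + 1) * |X (n + 2) t| := by
        calc -(k (n + 1) * X (n + 2) t) = k (n + 1) * (-(X (n + 2) t)) := by ring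
          _ ≤ k (n + 1) * |X (n + 2) t| :=
            mul_le_mul_of_nonneg_left (neg_le_abs _) (hknn _)
      have h2 : k (n + 1) * |X (n + 2) t| ≤ k (n + 1) * Real.sqrt (energy X 0) :=
        mul_le_mul_of_nonneg_left (habs (n + 2) (by omega) t ht) (hknn _)
      have h3 : k (n + 1) * Real.sqrt (energy X 0) ≤ k n₂ * Real.sqrt (energy X 0) :=
        mul_le_mul_of_nonneg_right hle hsqnn
      linarith
  have hbdd : ∀ t ∈ Set.Ici (0:ℝ),
      BddAbove (Set.range fun n : ℕ => -(k (n + 1) * X (n + 2) t)) := fun t ht =>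
    ⟨k n₂ * Real.sqrt (energy X 0), by rintro y ⟨n, rfl⟩; exact hterm t ht n⟩
  have hsup_le : ∀ t ∈ Set.Ici (0:ℝ),
      classKfun k X t ≤ k n₂ * Real.sqrt (energy X 0) := fun t ht => ciSup_le (hterm t ht)
  have hlow : ∀ t ∈ Set.Ici (0:ℝ),
      -(k 1 * Real.sqrt (energy X 0)) ≤ classKfun k X t := by
    intro t ht
    have h0 : -(k 1 * X 2 t) ≤ classKfun k X t := le_ciSup (hbdd t ht) 0
    have h1 : k 1 * X 2 t ≤ k 1 * Real.sqrt (energy X 0) := by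
      calc k 1 * X 2 t ≤ k 1 * |X 2 t| :=
            mul_le_mul_of_nonneg_left (le_abs_self _) (hknn 1)
        _ ≤ _ := mul_le_mul_of_nonneg_left (habs 2 (by norm_num) t ht) (hknn 1)
    linarith
  set M := max (k n₂ * Real.sqrt (energy X 0)) (k 1 * Real.sqrt (energy X 0)) with hM
  have habsK : ∀ t ∈ Set.Ici (0:ℝ), |classKfun k X t| ≤ M := by
    intro t ht
    rw [abs_le]
    constructor
    · have h1 := hlow t ht
      have h2 : k 1 * Real.sqrt (energy X 0) ≤ M := le_max_right _ _
      linarith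
    · exact (hsup_le t ht).trans (le_max_left _ _)
  have hGc : ∀ n : ℕ, Continuous fun t : ℝ => -(k (n + 1) * X (n + 2) (max t 0)) := by
    intro n
    have h1 : Continuous fun t : ℝ => X (n + 2) (max t 0) :=
      (dyadic_contOn hX (n + 2)).comp_continuous
        (continuous_id.max continuous_const) (fun x => le_max_right x 0)
    exact (continuous_const.mul h1).neg
  set G : ℝ → ℝ := fun t => ⨆ n : ℕ, -(k (n + 1) * X (n + 2) (max t 0)) with hGdef
  have hGm : Measurable G := Measurable.iSup fun n => (hGc n).measurable
  have hGeq : ∀ t ∈ Set.Ici (0:ℝ), G t = classKfun k X t := by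
    intro t ht
    simp only [hGdef, classKfun, max_eq_left (Set.mem_Ici.mp ht : (0:ℝ) ≤ t)]
  refine ⟨?_, n₂, hsup_le⟩
  intro x hx
  refine ⟨Set.Ici 0 ∩ Set.Icc (x - 1) (x + 1),
    inter_mem self_mem_nhdsWithin
      (mem_nhdsWithin_of_mem_nhds (Icc_mem_nhds (by linarith) (by linarith))), ?_⟩
  have humeas : MeasurableSet (Set.Ici (0:ℝ) ∩ Set.Icc (x - 1) (x + 1)) :=
    measurableSet_Ici.inter measurableSet_Icc
  have hmu : volume (Set.Ici (0:ℝ) ∩ Set.Icc (x - 1) (x + 1)) ≠ ⊤ :=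
    ((measure_mono Set.inter_subset_right).trans_lt measure_Icc_lt_top).ne
  have hGint : IntegrableOn G (Set.Ici 0 ∩ Set.Icc (x - 1) (x + 1)) volume := by
    apply Measure.integrableOn_of_bounded hmu hGm.aestronglyMeasurable (M := M)
    filter_upwards [ae_restrict_mem humeas] with a ha
    rw [Real.norm_eq_abs, hGeq a ha.1]
    exact habsK a ha.1
  exact hGint.congr_fun (fun a ha => hGeq a ha.1) humeas
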